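/- Let (X,d) be a good, compact, geodesic metric space with non-trivial fundamental group. Then the roundness of X is equal to 1. -/

import Mathlib

/-- The set of exponents `q ≥ 1` for which the roundness inequality holds for all
quadruples of points, with respect to the distance function `d`. -/
noncomputable def roundnessSet {X : Type*} (d : X → X → ℝ) : Set ℝ :=
  {q : ℝ | 1 ≤ q ∧ ∀ x00 x01 x10 x11 : X,
    d x00 x11 ^ q + d x01 x10 ^ q ≤
      d x00 x01 ^ q + d x00 x10 ^ q + d x11 x01 ^ q + d x11 x10 ^ q}

/-- The roundness of a distance function `d` on `X`: the supremum (in `EReal`) of all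
exponents `q ≥ 1` for which the roundness inequality holds for all quadruples. -/
noncomputable def roundness {X : Type*} (d : X → X → ℝ) : EReal :=
  sSup ((fun q : ℝ => (q : EReal)) '' roundnessSet d)
/-- `γ : ℝ → X` is a geodesic segment from `x` to `y`, parametrized by arclength on
`[0, dist x y]` (i.e. an isometric embedding of `[0, dist x y]` sending `0 ↦ x` and
`dist x y ↦ y`). -/
def IsGeodesicSeg {X : Type*} [MetricSpace X] (x y : X) (γ : ℝ → X) : Prop :=
  γ 0 = x ∧ γ (dist x y) = y ∧
    ∀ s ∈ Set.Icc (0 : ℝ) (dist x y), ∀ t ∈ Set.Icc (0 : ℝ) (dist x y),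
      dist (γ s) (γ t) = |s - t|

/-- A metric space is geodesic if every pair of points is joined by a geodesic segment. -/
def IsGeodesicSpace (X : Type*) [MetricSpace X] : Prop :=
  ∀ x y : X, ∃ γ : ℝ → X, IsGeodesicSeg x y γ
/-- A subset `N` of a metric space is geodesically convex if for all `y, z ∈ N`, every
geodesic segment joining `y` to `z` (of length `dist y z`) has its image in `N`. -/
def GeodesicallyConvex {X : Type*} [MetricSpace X] (N : Set X) : Prop :=
  ∀ y ∈ N, ∀ z ∈ N, ∀ γ : ℝ → X, IsGeodesicSeg y z γ →
    ∀ t ∈ Set.Icc (0 : ℝ) (dist y z), γ t ∈ N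

/-- A metric space is good if every point has a neighborhood which is simply connected
(as a subspace) and geodesically convex. -/
def IsGoodSpace (X : Type*) [MetricSpace X] : Prop :=
  ∀ p : X, ∃ N : Set X, N ∈ nhds p ∧ SimplyConnectedSpace N ∧ GeodesicallyConvex N

/-! ### Auxiliary machinery -/

open CategoryTheory unitInterval
open scoped NNReal

attribute [local instance] Path.Homotopic.setoid

section Aux

variable {Y : Type*} [TopologicalSpace Y]

/-- The homotopy class of a path, as a morphism in the fundamental groupoid. -/
noncomputable def phom {u v : Y} (p : Path u v) :
    FundamentalGroupoid.mk u ⟶ FundamentalGroupoid.mk v := ⟦p⟧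

theorem phom_trans {u v w : Y} (p : Path u v) (q : Path v w) :
    phom (p.trans q) = phom p ≫ phom q := by
  rw [FundamentalGroupoid.comp_eq]; rfl

theorem phom_refl (u : Y) : phom (Path.refl u) = 𝟙 (FundamentalGroupoid.mk u) := rfl

theorem phom_eq_of_homotopic {u v : Y} {p q : Path u v} (h : p.Homotopic q) :
    phom p = phom q := Quotient.sound h

theorem phom_symm_comp {u v : Y} (p : Path u v) :
    phom p.symm ≫ phom p = 𝟙 (FundamentalGroupoid.mk v) := by
  rw [← phom_trans, ← phom_refl]
  exact phom_eq_of_homotopic ⟨(Path.Homotopy.reflSymmTrans p).symm⟩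

theorem phom_comp_symm {u v : Y} (p : Path u v) :
    phom p ≫ phom p.symm = 𝟙 (FundamentalGroupoid.mk u) := by
  rw [← phom_trans, ← phom_refl]
  exact phom_eq_of_homotopic ⟨(Path.Homotopy.reflTransSymm p).symm⟩

theorem phom_digon {u v : Y} {p g : Path u v}
    (h : phom (p.trans g.symm) = 𝟙 (FundamentalGroupoid.mk u)) : phom p = phom g := by
  calc phom p = phom p ≫ 𝟙 _ := (Category.comp_id _).symm
    _ = phom p ≫ (phom g.symm ≫ phom g) := by rw [phom_symm_comp]
    _ = (phom p ≫ phom g.symm) ≫ phom g := (Category.assoc _ _ _).symm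
    _ = phom (p.trans g.symm) ≫ phom g := by rw [phom_trans]
    _ = 𝟙 _ ≫ phom g := by rw [h]
    _ = phom g := Category.id_comp _

end Aux

section MetricAux

variable {X : Type*} [MetricSpace X]

theorem I_dist (s t : I) : dist s t = |(s:ℝ) - (t:ℝ)| := by
  rw [Subtype.dist_eq, Real.dist_eq]

/-- The subpath of `p` between parameters `a` and `b`. -/
noncomputable def subp {x y : X} (p : Path x y) (a b : ℝ) {u v : X}
    (hu : p.extend a = u) (hv : p.extend b = v) : Path u v where
  toFun t := p.extend (a + (t : ℝ) * (b - a))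
  continuous_toFun := p.continuous_extend.comp (by continuity)
  source' := by simpa using hu
  target' := by simpa using hv

theorem subp_apply {x y : X} (p : Path x y) (a b : ℝ) {u v : X}
    (hu : p.extend a = u) (hv : p.extend b = v) (t : I) :
    subp p a b hu hv t = p.extend (a + (t : ℝ) * (b - a)) := rfl

theorem lipschitzWith_subp {x y : X} {p : Path x y} {K : ℝ≥0} (hp : LipschitzWith K p)
    {a b : ℝ} (ha : 0 ≤ a) (hab : a ≤ b) (hb : b ≤ 1) {u v : X}
    (hu : p.extend a = u) (hv : p.extend b = v) {K' : ℝ≥0} (hK' : (K : ℝ) * (b - a) ≤ K') :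
    LipschitzWith K' (subp p a b hu hv) := by
  apply LipschitzWith.of_dist_le_mul
  intro s t
  have hs : a + (s : ℝ) * (b - a) ∈ Set.Icc (0:ℝ) 1 := by
    constructor <;> nlinarith [s.2.1, s.2.2]
  have ht : a + (t : ℝ) * (b - a) ∈ Set.Icc (0:ℝ) 1 := by
    constructor <;> nlinarith [t.2.1, t.2.2]
  rw [subp_apply, subp_apply, Path.extend_apply p hs, Path.extend_apply p ht]
  calc dist (p ⟨_, hs⟩) (p ⟨_, ht⟩) ≤ K * dist (⟨_, hs⟩ : I) ⟨_, ht⟩ := hp.dist_le_mul _ _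
    _ ≤ K' * dist s t := by
        rw [I_dist, I_dist]
        have he : (a + (s:ℝ)*(b-a)) - (a + (t:ℝ)*(b-a)) = ((s:ℝ) - t) * (b - a) := by ring
        rw [he, abs_mul, abs_of_nonneg (by linarith : (0:ℝ) ≤ b - a)]
        have hK0 : (0:ℝ) ≤ K := K.2
        nlinarith [abs_nonneg ((s:ℝ) - t)]

theorem subp_split {u v : X} (p : Path u v) {c : ℝ} (h0 : 0 ≤ c) (h1 : c ≤ 1) {w : X}
    (hw : p.extend c = w) :
    p.Homotopic ((subp p 0 c p.extend_zero hw).trans (subp p c 1 hw p.extend_one)) := by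
  set sg : I → ℝ := fun t => if (t:ℝ) ≤ 1/2 then 2*(t:ℝ)*c else c + (2*(t:ℝ)-1)*(1-c) with hsg
  have hmem : ∀ t : I, sg t ∈ I := by
    intro t
    simp only [hsg]
    split_ifs with h
    · constructor
      · nlinarith [t.2.1]
      · nlinarith [t.2.1]
    · constructor
      · nlinarith [t.2.2, t.2.1]
      · nlinarith [t.2.2]
  set f : I → I := fun t => ⟨sg t, hmem t⟩ with hf
  have hfc : Continuous f := by
    apply Continuous.subtype_mk
    apply Continuous.if_le
    · fun_prop
    · fun_prop
    · exact continuous_subtype_val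
    · exact continuous_const
    · intro t ht; rw [ht]; ring
  have hf0 : f 0 = 0 := by
    apply Subtype.ext
    simp [hf, hsg]
  have hf1 : f 1 = 1 := by
    apply Subtype.ext
    simp [hf, hsg]
    norm_num
  have key : (subp p 0 c p.extend_zero hw).trans (subp p c 1 hw p.extend_one)
      = p.reparam f hfc hf0 hf1 := by
    ext t
    rw [Path.trans_apply]
    have hrep : (p.reparam f hfc hf0 hf1) t = p (f t) := rfl
    rw [hrep]
    split_ifs with h
    · rw [subp_apply]
      have hmem2 : (0:ℝ) + (2*(t:ℝ)) * (c - 0) ∈ Set.Icc (0:ℝ) 1 := by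
        constructor
        · nlinarith [t.2.1]
        · nlinarith [t.2.1]
      rw [Path.extend_apply p hmem2]
      congr 1
      apply Subtype.ext
      simp only [hf, hsg]
      rw [if_pos h]
      ring
    · rw [subp_apply]
      have hmem2 : c + (2*(t:ℝ)-1) * (1 - c) ∈ Set.Icc (0:ℝ) 1 := by
        constructor
        · nlinarith [t.2.2, t.2.1]
        · nlinarith [t.2.2]
      rw [Path.extend_apply p hmem2]
      congr 1
      apply Subtype.ext
      simp only [hf, hsg]
      rw [if_neg h]
  rw [key]
  exact ⟨Path.Homotopy.reparam p f hfc hf0 hf1⟩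

theorem subp_extend {x y : X} (p : Path x y) (a b : ℝ) {u v : X}
    (hu : p.extend a = u) (hv : p.extend b = v) {r : ℝ} (hr : r ∈ Set.Icc (0:ℝ) 1) :
    (subp p a b hu hv).extend r = p.extend (a + r * (b - a)) := by
  rw [Path.extend_apply _ hr]
  rfl

theorem subp_split_quarters {u v : X} (p : Path u v) {w₁ w₂ : X}
    (hw1 : p.extend (1/4) = w₁) (hw2 : p.extend (3/4) = w₂) :
    p.Homotopic ((subp p 0 (1/4) p.extend_zero hw1).trans
      ((subp p (1/4) (3/4) hw1 hw2).trans (subp p (3/4) 1 hw2 p.extend_one))) := by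
  have h₁ := subp_split p (by norm_num : (0:ℝ) ≤ 1/4) (by norm_num : (1:ℝ)/4 ≤ 1) hw1
  set R := subp p (1/4) 1 hw1 p.extend_one with hR
  have hw' : R.extend (2/3) = w₂ := by
    rw [hR, subp_extend p _ _ _ _ (by norm_num : (2:ℝ)/3 ∈ Set.Icc (0:ℝ) 1)]
    rw [show (1:ℝ)/4 + (2/3) * (1 - 1/4) = 3/4 by norm_num]
    exact hw2
  have h₂ := subp_split R (by norm_num : (0:ℝ) ≤ 2/3) (by norm_num : (2:ℝ)/3 ≤ 1) hw'
  have E1 : subp R 0 (2/3) R.extend_zero hw' = subp p (1/4) (3/4) hw1 hw2 := by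
    ext t
    show R.extend (0 + (t:ℝ) * (2/3 - 0)) = p.extend (1/4 + (t:ℝ) * (3/4 - 1/4))
    rw [hR, subp_extend p _ _ _ _ (by constructor <;> nlinarith [t.2.1, t.2.2] :
      (0:ℝ) + (t:ℝ) * (2/3 - 0) ∈ Set.Icc (0:ℝ) 1)]
    congr 1
    ring
  have E2 : subp R (2/3) 1 hw' R.extend_one = subp p (3/4) 1 hw2 p.extend_one := by
    ext t
    show R.extend (2/3 + (t:ℝ) * (1 - 2/3)) = p.extend (3/4 + (t:ℝ) * (1 - 3/4))
    rw [hR, subp_extend p _ _ _ _ (by constructor <;> nlinarith [t.2.1, t.2.2] :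
      (2:ℝ)/3 + (t:ℝ) * (1 - 2/3) ∈ Set.Icc (0:ℝ) 1)]
    congr 1
    ring
  rw [E1, E2] at h₂
  exact h₁.trans (Path.Homotopic.hcomp (Path.Homotopic.refl _) h₂)

theorem lipschitzWith_path_symm {x y : X} {p : Path x y} {K : ℝ≥0}
    (hp : LipschitzWith K p) : LipschitzWith K p.symm := by
  apply LipschitzWith.of_dist_le_mul
  intro s t
  show dist (p (σ s)) (p (σ t)) ≤ K * dist s t
  calc dist (p (σ s)) (p (σ t)) ≤ K * dist (σ s) (σ t) := hp.dist_le_mul _ _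
    _ = K * dist s t := by
        rw [I_dist, I_dist, coe_symm_eq, coe_symm_eq, show (1:ℝ) - s - (1 - t) = -((s:ℝ) - t) by
          ring, abs_neg]

theorem lipschitzWith_path_trans {x y z : X} {p : Path x y} {q : Path y z} {K : ℝ≥0}
    (hp : LipschitzWith K p) (hq : LipschitzWith K q) : LipschitzWith (2*K) (p.trans q) := by
  have main : ∀ s t : I, (s:ℝ) ≤ (t:ℝ) →
      dist ((p.trans q) s) ((p.trans q) t) ≤ (2*K : ℝ≥0) * dist s t := by
    intro s t hst
    rw [Path.trans_apply, Path.trans_apply, I_dist]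
    push_cast
    split_ifs with h1 h2 h2
    · calc dist (p ⟨2*(s:ℝ), _⟩) (p ⟨2*(t:ℝ), _⟩) ≤ K * dist (⟨2*(s:ℝ), _⟩ : I) ⟨2*(t:ℝ), _⟩ :=
          hp.dist_le_mul _ _
        _ ≤ 2 * K * |(s:ℝ) - t| := by
          rw [I_dist]
          have : |2*(s:ℝ) - 2*(t:ℝ)| = 2 * |(s:ℝ) - t| := by
            rw [show 2*(s:ℝ) - 2*(t:ℝ) = 2*((s:ℝ)-t) by ring, abs_mul, abs_two]
          rw [this]
          have hK : (0:ℝ) ≤ K := K.2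
          nlinarith [abs_nonneg ((s:ℝ) - t)]
    · -- s ≤ 1/2 < t
      have habs : |(s:ℝ) - t| = (t:ℝ) - s := by
        rw [abs_of_nonpos (by linarith)]; ring
      have hmem1 : 2*(s:ℝ) ∈ I := ⟨by linarith [s.2.1], by linarith⟩
      have hmem2 : 2*(t:ℝ)-1 ∈ I := ⟨by linarith, by linarith [t.2.2]⟩
      have h1' := hp.dist_le_mul (⟨2*(s:ℝ), hmem1⟩ : I) 1
      have h2' := hq.dist_le_mul (0 : I) (⟨2*(t:ℝ)-1, hmem2⟩ : I)
      rw [p.target] at h1'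
      rw [q.source] at h2'
      have e1 : dist (⟨2*(s:ℝ), hmem1⟩ : I) (1:I) = 1 - 2*(s:ℝ) := by
        rw [I_dist]
        show |2*(s:ℝ) - 1| = _
        rw [abs_of_nonpos (by linarith)]; ring
      have e2 : dist (0:I) (⟨2*(t:ℝ)-1, hmem2⟩ : I) = 2*(t:ℝ) - 1 := by
        rw [I_dist]
        show |0 - (2*(t:ℝ)-1)| = _
        rw [abs_of_nonpos (by linarith)]; ring
      rw [e1] at h1'
      rw [e2] at h2'
      have hK : (0:ℝ) ≤ K := K.2
      calc dist (p ⟨2*(s:ℝ), _⟩) (q ⟨2*(t:ℝ)-1, _⟩)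
          ≤ dist (p ⟨2*(s:ℝ), hmem1⟩) y + dist y (q ⟨2*(t:ℝ)-1, hmem2⟩) := dist_triangle _ _ _
        _ ≤ 2 * K * |(s:ℝ) - t| := by rw [habs]; linarith
    · linarith
    · calc dist (q ⟨2*(s:ℝ)-1, _⟩) (q ⟨2*(t:ℝ)-1, _⟩)
          ≤ K * dist (⟨2*(s:ℝ)-1, _⟩ : I) ⟨2*(t:ℝ)-1, _⟩ := hq.dist_le_mul _ _
        _ ≤ 2 * K * |(s:ℝ) - t| := by
          rw [I_dist]
          have : |2*(s:ℝ)-1 - (2*(t:ℝ)-1)| = 2 * |(s:ℝ) - t| := by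
            rw [show 2*(s:ℝ)-1 - (2*(t:ℝ)-1) = 2*((s:ℝ)-t) by ring, abs_mul, abs_two]
          rw [this]
          have hK : (0:ℝ) ≤ K := K.2
          nlinarith [abs_nonneg ((s:ℝ) - t)]
  apply LipschitzWith.of_dist_le_mul
  intro s t
  rcases le_total (s:ℝ) (t:ℝ) with h | h
  · exact main s t h
  · rw [dist_comm, dist_comm s t]
    exact main t s h
theorem exists_weighted_trans {x y z : X} (p : Path x y) (q : Path y z) {K1 K2 : ℝ≥0}
    (hK1 : 0 < K1) (hK2 : 0 < K2) (hp : LipschitzWith K1 p) (hq : LipschitzWith K2 q) :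
    ∃ r : Path x z, LipschitzWith (K1+K2) r ∧ (p.trans q).Homotopic r := by
  have ha0 : (0:ℝ) < K1 := hK1
  have hb0 : (0:ℝ) < K2 := hK2
  set a : ℝ := (K1:ℝ)
  set b : ℝ := (K2:ℝ)
  have hab : 0 < a + b := by linarith
  set c : ℝ := a / (a + b) with hcdef
  have hc0 : 0 < c := div_pos ha0 hab
  have hc1 : c < 1 := by rw [hcdef, div_lt_one hab]; linarith
  have hac : a / c = a + b := by rw [hcdef]; field_simp
  have hbc : b / (1 - c) = a + b := by
    have : 1 - c = b / (a + b) := by rw [hcdef]; field_simp; ring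
    rw [this]; field_simp
  set sg : I → ℝ := fun t => if (t:ℝ) ≤ c then (t:ℝ)/(2*c) else 1 - (1-(t:ℝ))/(2*(1-c))
    with hsg
  have hmem : ∀ t : I, sg t ∈ I := by
    intro t
    simp only [hsg]
    split_ifs with h
    · constructor
      · exact div_nonneg t.2.1 (by linarith)
      · rw [div_le_one (by linarith)]; linarith
    · have h2 : (0:ℝ) ≤ (1-(t:ℝ))/(2*(1-c)) := by
        apply div_nonneg (by linarith [t.2.2]) (by linarith)
      have h3 : (1-(t:ℝ))/(2*(1-c)) ≤ 1 := by
        rw [div_le_one (by linarith)]; linarith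
      constructor <;> [linarith; linarith]
  set f : I → I := fun t => ⟨sg t, hmem t⟩ with hf
  have hfc : Continuous f := by
    apply Continuous.subtype_mk
    apply Continuous.if_le
    · fun_prop
    · fun_prop
    · exact continuous_subtype_val
    · exact continuous_const
    · intro t ht
      rw [ht]
      have hc' : c ≠ 0 := ne_of_gt hc0
      have h1c : (1:ℝ) - c ≠ 0 := by linarith
      field_simp
      ring
  have hf0 : f 0 = 0 := by
    apply Subtype.ext
    simp only [hf, hsg]
    rw [if_pos (by norm_num; linarith : ((0:I):ℝ) ≤ c)]
    norm_num
  have hf1 : f 1 = 1 := by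
    apply Subtype.ext
    simp only [hf, hsg]
    rw [if_neg (by norm_num; linarith : ¬ ((1:I):ℝ) ≤ c)]
    norm_num
  refine ⟨(p.trans q).reparam f hfc hf0 hf1, ?_, ⟨Path.Homotopy.reparam _ f hfc hf0 hf1⟩⟩
  -- value lemmas
  have memA : ∀ t : I, (t:ℝ) ≤ c → (t:ℝ)/c ∈ I := by
    intro t ht
    constructor
    · exact div_nonneg t.2.1 hc0.le
    · rw [div_le_one hc0]; linarith
  have memB : ∀ t : I, c < (t:ℝ) → ((t:ℝ)-c)/(1-c) ∈ I := by
    intro t ht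
    constructor
    · apply div_nonneg (by linarith) (by linarith)
    · rw [div_le_one (by linarith)]; linarith [t.2.2]
  have vA : ∀ (t : I) (ht : (t:ℝ) ≤ c),
      ((p.trans q).reparam f hfc hf0 hf1) t = p ⟨(t:ℝ)/c, memA t ht⟩ := by
    intro t ht
    show (p.trans q) (f t) = _
    rw [Path.trans_apply]
    have hft : ((f t : I) : ℝ) = (t:ℝ)/(2*c) := by simp only [hf, hsg]; rw [if_pos ht]
    rw [dif_pos (by rw [hft]; rw [div_le_div_iff₀ (by linarith) (by norm_num)]; linarith :
      ((f t : I) : ℝ) ≤ 1/2)]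
    congr 1
    apply Subtype.ext
    show 2 * ((f t : I) : ℝ) = (t:ℝ)/c
    rw [hft]; field_simp
  have vB : ∀ (t : I) (ht : c < (t:ℝ)),
      ((p.trans q).reparam f hfc hf0 hf1) t = q ⟨((t:ℝ)-c)/(1-c), memB t ht⟩ := by
    intro t ht
    show (p.trans q) (f t) = _
    rw [Path.trans_apply]
    have hft : ((f t : I) : ℝ) = 1 - (1-(t:ℝ))/(2*(1-c)) := by
      simp only [hf, hsg]; rw [if_neg (by linarith)]
    rw [dif_neg (by
      rw [hft]
      intro hcon
      have : (1-(t:ℝ))/(2*(1-c)) < 1/2 := by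
        rw [div_lt_div_iff₀ (by linarith) (by norm_num)]; linarith
      linarith : ¬ ((f t : I) : ℝ) ≤ 1/2)]
    congr 1
    apply Subtype.ext
    show 2 * ((f t : I) : ℝ) - 1 = ((t:ℝ)-c)/(1-c)
    rw [hft]
    have h1c : (1:ℝ) - c ≠ 0 := by linarith
    field_simp
    ring
  -- Lipschitz estimate
  have main : ∀ s t : I, (s:ℝ) ≤ (t:ℝ) →
      dist (((p.trans q).reparam f hfc hf0 hf1) s) (((p.trans q).reparam f hfc hf0 hf1) t)
        ≤ ((K1+K2 : ℝ≥0) : ℝ) * |(s:ℝ) - (t:ℝ)| := by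
    intro s t hst
    have hcoe : ((K1+K2 : ℝ≥0) : ℝ) = a + b := by push_cast; rfl
    rw [hcoe]
    rcases le_or_gt (t:ℝ) c with htc | htc
    · -- both ≤ c
      have hsc : (s:ℝ) ≤ c := le_trans hst htc
      rw [vA s hsc, vA t htc]
      calc dist (p ⟨(s:ℝ)/c, _⟩) (p ⟨(t:ℝ)/c, _⟩)
          ≤ K1 * dist (⟨(s:ℝ)/c, memA s hsc⟩ : I) ⟨(t:ℝ)/c, memA t htc⟩ := hp.dist_le_mul _ _
        _ = (a+b) * |(s:ℝ) - t| := by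
            rw [I_dist]
            show a * |(s:ℝ)/c - (t:ℝ)/c| = _
            rw [show (s:ℝ)/c - (t:ℝ)/c = ((s:ℝ)-t)/c by ring, abs_div,
              abs_of_pos hc0, ← hac]
            field_simp
            try ring
    · rcases le_or_gt (s:ℝ) c with hsc | hsc
      · -- s ≤ c < t
        rw [vA s hsc, vB t htc]
        have e1 := hp.dist_le_mul (⟨(s:ℝ)/c, memA s hsc⟩ : I) 1
        have e2 := hq.dist_le_mul (0 : I) (⟨((t:ℝ)-c)/(1-c), memB t htc⟩ : I)
        rw [p.target] at e1
        rw [q.source] at e2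
        have d1 : dist (⟨(s:ℝ)/c, memA s hsc⟩ : I) (1:I) = 1 - (s:ℝ)/c := by
          rw [I_dist]
          show |(s:ℝ)/c - 1| = _
          rw [abs_of_nonpos (by rw [sub_nonpos, div_le_one hc0]; linarith)]
          ring
        have d2 : dist (0:I) (⟨((t:ℝ)-c)/(1-c), memB t htc⟩ : I) = ((t:ℝ)-c)/(1-c) := by
          rw [I_dist]
          show |0 - ((t:ℝ)-c)/(1-c)| = _
          rw [abs_of_nonpos (by rw [zero_sub, neg_nonpos]; apply div_nonneg (by linarith) (by linarith))]
          ring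
        rw [d1] at e1
        rw [d2] at e2
        have habs : |(s:ℝ) - t| = (t:ℝ) - s := by rw [abs_of_nonpos (by linarith)]; ring
        have k1 : a * (1 - (s:ℝ)/c) = (a+b) * (c - s) := by
          rw [← hac]; field_simp; try ring
        have k2 : b * (((t:ℝ)-c)/(1-c)) = (a+b) * ((t:ℝ) - c) := by
          rw [← hbc]; field_simp; try ring
        calc dist (p ⟨(s:ℝ)/c, _⟩) (q ⟨((t:ℝ)-c)/(1-c), _⟩)
            ≤ dist (p ⟨(s:ℝ)/c, memA s hsc⟩) y + dist y (q ⟨((t:ℝ)-c)/(1-c), memB t htc⟩) :=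
              dist_triangle _ _ _
          _ ≤ (a+b) * |(s:ℝ) - t| := by rw [habs]; nlinarith
      · -- both > c
        rw [vB s hsc, vB t htc]
        calc dist (q ⟨((s:ℝ)-c)/(1-c), _⟩) (q ⟨((t:ℝ)-c)/(1-c), _⟩)
            ≤ K2 * dist (⟨((s:ℝ)-c)/(1-c), memB s hsc⟩ : I) ⟨((t:ℝ)-c)/(1-c), memB t htc⟩ :=
              hq.dist_le_mul _ _
          _ = (a+b) * |(s:ℝ) - t| := by
              rw [I_dist]
              show b * |((s:ℝ)-c)/(1-c) - ((t:ℝ)-c)/(1-c)| = _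
              rw [show ((s:ℝ)-c)/(1-c) - ((t:ℝ)-c)/(1-c) = ((s:ℝ)-t)/(1-c) by ring, abs_div,
                abs_of_pos (by linarith : (0:ℝ) < 1-c), ← hbc]
              field_simp
              try ring
  apply LipschitzWith.of_dist_le_mul
  intro s t
  rcases le_total (s:ℝ) (t:ℝ) with h | h
  · rw [I_dist]; exact main s t h
  · rw [I_dist, dist_comm, abs_sub_comm]
    exact main t s h

theorem exists_good_radius [CompactSpace X] (hgood : IsGoodSpace X) :
    ∃ ε : ℝ, 0 < ε ∧ ∀ a : X, ∃ N : Set X, SimplyConnectedSpace N ∧ GeodesicallyConvex N ∧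
      Metric.ball a ε ⊆ N := by
  choose N hnhds hsc hconv using hgood
  have hcover : (Set.univ : Set X) ⊆ ⋃ p, interior (N p) := by
    intro p _
    exact Set.mem_iUnion.mpr ⟨p, mem_interior_iff_mem_nhds.mpr (hnhds p)⟩
  obtain ⟨ε, hε, hball⟩ := lebesgue_number_lemma_of_metric isCompact_univ
    (fun p => isOpen_interior) hcover
  refine ⟨ε, hε, fun a => ?_⟩
  obtain ⟨p, hp⟩ := hball a trivial
  exact ⟨N p, hsc p, hconv p, hp.trans interior_subset⟩

theorem null_of_mem_simply_connected {u : X} (γ : Path u u) (N : Set X)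
    (hsc : SimplyConnectedSpace N) (hu : u ∈ N) (hr : ∀ t, γ t ∈ N) :
    γ.Homotopic (Path.refl u) := by
  haveI := hsc
  set γ' : Path (⟨u, hu⟩ : N) ⟨u, hu⟩ :=
    { toFun := fun t => (⟨γ t, hr t⟩ : N)
      continuous_toFun := γ.continuous.subtype_mk _
      source' := Subtype.ext γ.source
      target' := Subtype.ext γ.target } with hγ'
  have h := SimplyConnectedSpace.paths_homotopic γ' (Path.refl (⟨u, hu⟩ : N))
  have h2 := Path.Homotopic.map h (⟨Subtype.val, continuous_subtype_val⟩ : C(N, X))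
  have e1 : γ'.map (continuous_subtype_val) = γ := by
    ext t
    rfl
  have e2 : (Path.refl (⟨u, hu⟩ : N)).map (continuous_subtype_val) = Path.refl u := by
    ext t
    rfl
  rwa [e1, e2] at h2

theorem exists_gpath (hgeo : IsGeodesicSpace X) (x y : X) :
    ∃ p : Path x y, LipschitzWith (nndist x y) p ∧
      ∀ N : Set X, GeodesicallyConvex N → x ∈ N → y ∈ N → ∀ t, p t ∈ N := by
  obtain ⟨g, hg⟩ := hgeo x y
  obtain ⟨hg0, hgD, hiso⟩ := hg
  set D := dist x y with hD
  have hD0 : 0 ≤ D := dist_nonneg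
  have hmem : ∀ t : I, D * (t:ℝ) ∈ Set.Icc (0:ℝ) D := by
    intro t
    constructor
    · exact mul_nonneg hD0 t.2.1
    · nlinarith [t.2.2, t.2.1]
  have hlip : LipschitzWith (nndist x y) (fun t : I => g (D * (t:ℝ))) := by
    apply LipschitzWith.of_dist_le_mul
    intro s t
    rw [hiso _ (hmem s) _ (hmem t), Subtype.dist_eq, Real.dist_eq]
    rw [show D * (s:ℝ) - D * (t:ℝ) = D * ((s:ℝ) - (t:ℝ)) by ring, abs_mul,
      abs_of_nonneg hD0]
    exact le_of_eq rfl
  refine ⟨{ toFun := fun t : I => g (D * (t:ℝ))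
            continuous_toFun := hlip.continuous
            source' := by simpa using hg0
            target' := by simpa using hgD }, hlip, ?_⟩
  intro N hconv hx hy t
  exact hconv x hx y hy g ⟨hg0, hgD, hiso⟩ _ (hmem t)

end MetricAux

section PG

variable {X : Type*} [MetricSpace X]

/-- A path contained in the `ε`-ball around its source is homotopic (rel endpoints)
to a geodesic path between its endpoints. -/
theorem small_path_phom (hgeo : IsGeodesicSpace X) {ε : ℝ} (hε : 0 < ε)
    (hgr : ∀ a : X, ∃ N : Set X, SimplyConnectedSpace N ∧ GeodesicallyConvex N ∧
      Metric.ball a ε ⊆ N)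
    {u v : X} (p : Path u v) (hsmall : ∀ t : I, dist (p t) u < ε) :
    ∃ p' : Path u v, LipschitzWith (nndist u v) p' ∧ phom p = phom p' := by
  obtain ⟨N, hsc, hconv, hball⟩ := hgr u
  have huN : u ∈ N := hball (Metric.mem_ball_self hε)
  have hvN : v ∈ N := by
    apply hball
    rw [Metric.mem_ball]
    have := hsmall 1
    rwa [p.target] at this
  obtain ⟨g, hgLip, hgN⟩ := exists_gpath hgeo u v
  have hrange : ∀ t, (p.trans g.symm) t ∈ N := by
    intro t
    rw [Path.trans_apply]
    split_ifs with h
    · exact hball (Metric.mem_ball.mpr (hsmall _))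
    · exact hgN N hconv huN hvN (σ _)
  have hnull := null_of_mem_simply_connected (p.trans g.symm) N hsc huN hrange
  have h1 : phom (p.trans g.symm) = 𝟙 (FundamentalGroupoid.mk u) := by
    rw [phom_eq_of_homotopic hnull, phom_refl]
  exact ⟨g, hgLip, phom_digon h1⟩

/-- Every path with small modulus of continuity is homotopic rel endpoints to a Lipschitz
path (a piecewise geodesic). -/
theorem exists_lipschitz_rep (hgeo : IsGeodesicSpace X) {ε : ℝ} (hε : 0 < ε)
    (hgr : ∀ a : X, ∃ N : Set X, SimplyConnectedSpace N ∧ GeodesicallyConvex N ∧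
      Metric.ball a ε ⊆ N) :
    ∀ (n : ℕ) (u v : X) (p : Path u v),
      (∀ s t : I, |(s:ℝ) - (t:ℝ)| ≤ 1/(n+1) → dist (p s) (p t) < ε) →
      ∃ (K : ℝ≥0) (p' : Path u v), LipschitzWith K p' ∧ phom p = phom p' := by
  intro n
  induction n with
  | zero =>
    intro u v p hmod
    have hsmall : ∀ t : I, dist (p t) u < ε := by
      intro t
      have := hmod t 0 (by
        rw [show ((0:I):ℝ) = 0 from rfl, sub_zero, abs_of_nonneg t.2.1]
        norm_num
        exact t.2.2)
      rwa [p.source] at this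
    obtain ⟨p', hLip, heq⟩ := small_path_phom hgeo hε hgr p hsmall
    exact ⟨nndist u v, p', hLip, heq⟩
  | succ n ih =>
    intro u v p hmod
    have hnn : (0:ℝ) ≤ (n:ℝ) := Nat.cast_nonneg n
    have hmod' : ∀ s t : I, |(s:ℝ) - (t:ℝ)| ≤ 1/((n:ℝ)+2) → dist (p s) (p t) < ε := by
      intro s t h
      apply hmod
      push_cast
      rw [show ((n:ℝ)+1+1) = (n:ℝ)+2 by ring]
      exact h
    set c : ℝ := 1/((n:ℝ)+2) with hc
    have hc0 : 0 < c := by positivity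
    have hc1 : c ≤ 1 := by rw [hc, div_le_one (by positivity)]; linarith
    set w := p.extend c with hw
    set head := subp p 0 c p.extend_zero hw.symm with hhead
    set tail := subp p c 1 hw.symm p.extend_one with htail
    have hsplit := subp_split p hc0.le hc1 hw.symm
    -- the head is small
    have hsmall : ∀ t : I, dist (head t) u < ε := by
      intro t
      have hmem2 : (0:ℝ) + (t:ℝ) * (c - 0) ∈ Set.Icc (0:ℝ) 1 := by
        constructor
        · nlinarith [t.2.1]
        · nlinarith [t.2.1, t.2.2]
      have hval : head t = p ⟨_, hmem2⟩ := by
        rw [hhead, subp_apply, Path.extend_apply p hmem2]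
      rw [hval]
      have := hmod' ⟨_, hmem2⟩ 0 (by
        show |(0 + (t:ℝ)*(c-0)) - ((0:I):ℝ)| ≤ 1/((n:ℝ)+2)
        rw [show ((0:I):ℝ) = 0 from rfl, sub_zero,
          abs_of_nonneg (by nlinarith [t.2.1] : (0:ℝ) ≤ 0 + (t:ℝ)*(c-0))]
        rw [show (1:ℝ)/((n:ℝ)+2) = c from hc.symm]
        nlinarith [t.2.1, t.2.2])
      rwa [p.source] at this
    obtain ⟨g, hgLip, hgeq⟩ := small_path_phom hgeo hε hgr head hsmall
    -- the tail has modulus for n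
    have hmodtail : ∀ s t : I, |(s:ℝ) - (t:ℝ)| ≤ 1/(n+1) → dist (tail s) (tail t) < ε := by
      intro s t hst
      have hmems : c + (s:ℝ) * (1 - c) ∈ Set.Icc (0:ℝ) 1 := by
        constructor
        · nlinarith [s.2.1]
        · nlinarith [s.2.1, s.2.2]
      have hmemt : c + (t:ℝ) * (1 - c) ∈ Set.Icc (0:ℝ) 1 := by
        constructor
        · nlinarith [t.2.1]
        · nlinarith [t.2.1, t.2.2]
      have hvals : tail s = p ⟨_, hmems⟩ := by
        rw [htail, subp_apply, Path.extend_apply p hmems]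
      have hvalt : tail t = p ⟨_, hmemt⟩ := by
        rw [htail, subp_apply, Path.extend_apply p hmemt]
      rw [hvals, hvalt]
      apply hmod'
      show |(c + (s:ℝ)*(1-c)) - (c + (t:ℝ)*(1-c))| ≤ 1/((n:ℝ)+2)
      rw [show (c + (s:ℝ)*(1-c)) - (c + (t:ℝ)*(1-c)) = ((s:ℝ) - t) * (1-c) by ring,
        abs_mul, abs_of_nonneg (by linarith : (0:ℝ) ≤ 1 - c)]
      have h1c : 1 - c = ((n:ℝ)+1)/((n:ℝ)+2) := by
        rw [hc]
        field_simp
        ring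
      rw [h1c]
      have hn1 : (0:ℝ) < (n:ℝ)+1 := by positivity
      have hn2 : (0:ℝ) < (n:ℝ)+2 := by positivity
      have hstle : |(s:ℝ) - (t:ℝ)| ≤ 1/((n:ℝ)+1) := by
        have := hst
        push_cast at this ⊢
        linarith
      calc |(s:ℝ) - t| * (((n:ℝ)+1)/((n:ℝ)+2)) ≤ (1/((n:ℝ)+1)) * (((n:ℝ)+1)/((n:ℝ)+2)) := by
            apply mul_le_mul_of_nonneg_right hstle
            positivity
        _ = 1/((n:ℝ)+2) := by field_simp
    obtain ⟨K', tail', hLip', heq'⟩ := ih w v tail hmodtail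
    refine ⟨2 * max (nndist u w) K', g.trans tail',
      lipschitzWith_path_trans (hgLip.weaken (le_max_left _ _)) (hLip'.weaken (le_max_right _ _)),
      ?_⟩
    rw [phom_eq_of_homotopic hsplit, phom_trans, phom_trans, ← hgeq, ← heq']

end PG

section Master

theorem no_big_exponent {X : Type*} [MetricSpace X] [CompactSpace X]
    (hgeo : IsGeodesicSpace X) (hgood : IsGoodSpace X)
    (hpi : ∃ x : X, Nontrivial (FundamentalGroup X x)) {q : ℝ} (hq1 : 1 < q)
    (hq2 : ∀ x00 x01 x10 x11 : X, dist x00 x11 ^ q + dist x01 x10 ^ q ≤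
      dist x00 x01 ^ q + dist x00 x10 ^ q + dist x11 x01 ^ q + dist x11 x10 ^ q) :
    False := by
  obtain ⟨ε, hε, hgr⟩ := exists_good_radius hgood
  obtain ⟨x, hFG⟩ := hpi
  -- an essential loop exists
  have hloop : ∃ γ : Path x x, phom γ ≠ 𝟙 (FundamentalGroupoid.mk x) := by
    have hone : ∃ φ : FundamentalGroup X x, φ ≠ 1 := by
      obtain ⟨a, b, hab⟩ := hFG.exists_pair_ne
      rcases eq_or_ne a 1 with h | h
      · exact ⟨b, by rw [h] at hab; exact hab.symm⟩
      · exact ⟨a, h⟩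
    obtain ⟨φ, hφ⟩ := hone
    obtain ⟨γ, hγ⟩ := Quotient.exists_rep φ
    refine ⟨γ, fun hcon => hφ ?_⟩
    show φ = 𝟙 _
    rw [← hγ]
    exact hcon
  obtain ⟨γ0, hEss0⟩ := hloop
  -- the set of Lipschitz constants of essential loops
  set S : Set ℝ≥0 := {K | ∃ (u : X) (δ : Path u u), LipschitzWith K δ ∧
    phom δ ≠ 𝟙 (FundamentalGroupoid.mk u)} with hS
  have hSne : S.Nonempty := by
    have hcont : UniformContinuous γ0 :=
      CompactSpace.uniformContinuous_of_continuous γ0.continuous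
    obtain ⟨dd, hdd, hmod0⟩ := Metric.uniformContinuous_iff.mp hcont ε hε
    obtain ⟨n, hn⟩ := exists_nat_one_div_lt hdd
    obtain ⟨K, γ', hLip', heq⟩ := exists_lipschitz_rep hgeo hε hgr n x x γ0 (by
      intro s t hst
      apply hmod0
      rw [Subtype.dist_eq, Real.dist_eq]
      exact lt_of_le_of_lt hst hn)
    exact ⟨K, x, γ', hLip', by rw [← heq]; exact hEss0⟩
  set ℓ := sInf S with hℓ
  have hℓS : ∀ K ∈ S, ℓ ≤ K := fun K hK => csInf_le (OrderBot.bddBelow S) hK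
  have hlb : ∀ K ∈ S, ε.toNNReal ≤ K := by
    rintro K ⟨u, δ, hLip, hNE⟩
    by_contra hcon
    push_neg at hcon
    have hKε : (K:ℝ) < ε := by
      have := NNReal.coe_lt_coe.mpr hcon
      rwa [Real.coe_toNNReal _ hε.le] at this
    obtain ⟨N, hsc, hconv, hball⟩ := hgr u
    have hnull : δ.Homotopic (Path.refl u) := by
      apply null_of_mem_simply_connected δ N hsc (hball (Metric.mem_ball_self hε))
      intro t
      apply hball
      rw [Metric.mem_ball]
      have h0 : δ 0 = u := δ.source
      calc dist (δ t) u = dist (δ t) (δ 0) := by rw [h0]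
        _ ≤ K * dist t 0 := hLip.dist_le_mul _ _
        _ ≤ K * 1 := by
            apply mul_le_mul_of_nonneg_left _ K.2
            rw [I_dist]
            rw [show ((0:I):ℝ) = 0 from rfl, sub_zero, abs_of_nonneg t.2.1]
            exact t.2.2
        _ < ε := by rw [mul_one]; exact hKε
    exact hNE (by rw [phom_eq_of_homotopic hnull, phom_refl])
  have hℓlb : ε.toNNReal ≤ ℓ := le_csInf hSne hlb
  have hℓpos : (0:ℝ≥0) < ℓ := lt_of_lt_of_le (Real.toNNReal_pos.mpr hε) hℓlb
  have hℓR : (0:ℝ) < ℓ := hℓpos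
  have smallK : ∀ (w : X) (r : Path w w) (K : ℝ≥0), LipschitzWith K r → K < ℓ →
      phom r = 𝟙 (FundamentalGroupoid.mk w) := by
    intro w r K hLip hKlt
    by_contra hne
    exact absurd (hℓS K ⟨w, r, hLip, hne⟩) (not_le.mpr hKlt)
  -- parameters
  have hq0 : (0:ℝ) < q := by linarith
  set th : ℝ := (2:ℝ) ^ (1/q) with hth
  have hth1 : 1 < th := Real.one_lt_rpow_iff_of_pos (by norm_num) |>.mpr
    (Or.inl ⟨by norm_num, by positivity⟩)
  have hth2 : th < 2 := by
    rw [hth]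
    calc (2:ℝ) ^ (1/q) < 2 ^ (1:ℝ) := by
          apply Real.rpow_lt_rpow_of_exponent_lt (by norm_num)
          rw [div_lt_one hq0]
          exact hq1
      _ = 2 := Real.rpow_one 2
  have hthq : th ^ q = 2 := by
    rw [hth, ← Real.rpow_mul (by norm_num : (0:ℝ) ≤ 2), one_div,
      inv_mul_cancel₀ (ne_of_gt hq0), Real.rpow_one]
  have hth0 : (0:ℝ) ≤ th := by linarith
  set dr : ℝ := (ℓ:ℝ) * (2 - th)/16 with hdr
  have hdr0 : 0 < dr := by
    apply div_pos _ (by norm_num)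
    apply mul_pos hℓR
    linarith
  set d0 : ℝ≥0 := dr.toNNReal with hd0def
  have hd0coe : (d0:ℝ) = dr := Real.coe_toNNReal _ hdr0.le
  have hd0 : 0 < d0 := Real.toNNReal_pos.mpr hdr0
  -- pick an essential loop of nearly minimal length
  obtain ⟨L, hLS, hLlt⟩ := exists_lt_of_csInf_lt hSne
    (show sInf S < ℓ + d0 from lt_add_of_pos_right _ hd0)
  obtain ⟨u, γ, hLip, hNE⟩ := hLS
  have hℓL : ℓ ≤ L := hℓS L ⟨u, γ, hLip, hNE⟩
  have hLpos : (0:ℝ) < L := lt_of_lt_of_le hℓR (NNReal.coe_le_coe.mpr hℓL)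
  have hLltR : (L:ℝ) < (ℓ:ℝ) + dr := by
    have := NNReal.coe_lt_coe.mpr hLlt
    rwa [NNReal.coe_add, hd0coe] at this
  -- quarter points
  set b := γ.extend (1/4) with hb
  set cc := γ.extend (1/2) with hcc
  set dd := γ.extend (3/4) with hdd
  -- distance upper bounds
  have hd_ub : ∀ s t : ℝ, s ∈ Set.Icc (0:ℝ) 1 → t ∈ Set.Icc (0:ℝ) 1 →
      dist (γ.extend s) (γ.extend t) ≤ (L:ℝ) * |s - t| := by
    intro s t hs ht
    rw [Path.extend_apply γ hs, Path.extend_apply γ ht]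
    have := hLip.dist_le_mul ⟨s, hs⟩ ⟨t, ht⟩
    rwa [I_dist] at this
  have hu0 : γ.extend 0 = u := γ.extend_zero
  have hu1 : γ.extend 1 = u := γ.extend_one
  have hub : dist u b ≤ (L:ℝ)/4 := by
    rw [← hu0, hb]
    calc dist (γ.extend 0) (γ.extend (1/4)) ≤ (L:ℝ) * |0 - 1/4| :=
        hd_ub 0 (1/4) (by norm_num) (by norm_num)
      _ = (L:ℝ)/4 := by rw [show |(0:ℝ) - 1/4| = 1/4 by norm_num]; ring
  have hudd : dist u dd ≤ (L:ℝ)/4 := by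
    rw [← hu1, hdd]
    calc dist (γ.extend 1) (γ.extend (3/4)) ≤ (L:ℝ) * |1 - 3/4| :=
        hd_ub 1 (3/4) (by norm_num) (by norm_num)
      _ = (L:ℝ)/4 := by rw [show |(1:ℝ) - 3/4| = 1/4 by norm_num]; ring
  have hccb : dist cc b ≤ (L:ℝ)/4 := by
    rw [hcc, hb]
    calc dist (γ.extend (1/2)) (γ.extend (1/4)) ≤ (L:ℝ) * |1/2 - 1/4| :=
        hd_ub (1/2) (1/4) (by norm_num) (by norm_num)
      _ = (L:ℝ)/4 := by rw [show |(1:ℝ)/2 - 1/4| = 1/4 by norm_num]; ring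
  have hccdd : dist cc dd ≤ (L:ℝ)/4 := by
    rw [hcc, hdd]
    calc dist (γ.extend (1/2)) (γ.extend (3/4)) ≤ (L:ℝ) * |1/2 - 3/4| :=
        hd_ub (1/2) (3/4) (by norm_num) (by norm_num)
      _ = (L:ℝ)/4 := by rw [show |(1:ℝ)/2 - 3/4| = 1/4 by norm_num]; ring
  -- Lipschitz constants
  set L2 : ℝ≥0 := L/2 with hL2def
  have hL2coe : (L2:ℝ) = (L:ℝ)/2 := by rw [hL2def, NNReal.coe_div]; norm_num
  have hL2pos : 0 < L2 := by
    rw [← NNReal.coe_pos, hL2coe]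
    linarith
  set L4 : ℝ≥0 := L/4 with hL4def
  have hL4coe : (L4:ℝ) = (L:ℝ)/4 := by rw [hL4def, NNReal.coe_div]; norm_num
  have hL4pos : 0 < L4 := by
    rw [← NNReal.coe_pos, hL4coe]
    linarith
  -- Claim 1: the diagonal dist u cc is nearly ℓ/2
  have claim1 : (ℓ:ℝ) ≤ (L:ℝ)/2 + dist u cc + dr := by
    by_contra hcon
    push_neg at hcon
    set A := subp γ 0 (1/2) γ.extend_zero hcc.symm with hA
    set B := subp γ (1/2) 1 hcc.symm γ.extend_one with hB
    have hALip : LipschitzWith L2 A := lipschitzWith_subp hLip (by norm_num) (by norm_num)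
      (by norm_num) _ _ (by rw [hL2coe]; apply le_of_eq; ring)
    have hBLip : LipschitzWith L2 B := lipschitzWith_subp hLip (by norm_num) (by norm_num)
      (by norm_num) _ _ (by rw [hL2coe]; apply le_of_eq; ring)
    have hsplitγ : phom γ = phom A ≫ phom B := by
      rw [← phom_trans]
      exact phom_eq_of_homotopic (subp_split γ (by norm_num) (by norm_num) hcc.symm)
    obtain ⟨g, hgLip0, _⟩ := exists_gpath hgeo u cc
    set Kg : ℝ≥0 := nndist u cc + d0 with hKg
    have hKgpos : 0 < Kg := lt_of_lt_of_le hd0 (le_add_self)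
    have hgLip : LipschitzWith Kg g := hgLip0.weaken (self_le_add_right _ _)
    have hsum : L2 + Kg < ℓ := by
      rw [← NNReal.coe_lt_coe, NNReal.coe_add, hL2coe, hKg, NNReal.coe_add, coe_nndist, hd0coe]
      linarith
    obtain ⟨r1, hr1L, hr1H⟩ := exists_weighted_trans A g.symm hL2pos hKgpos hALip
      (lipschitzWith_path_symm hgLip)
    have h1 : phom (A.trans g.symm) = 𝟙 (FundamentalGroupoid.mk u) := by
      rw [phom_eq_of_homotopic hr1H]
      exact smallK u r1 _ hr1L hsum
    have hAg : phom A = phom g := phom_digon h1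
    obtain ⟨r2, hr2L, hr2H⟩ := exists_weighted_trans B g hL2pos hKgpos hBLip hgLip
    have h2 : phom B ≫ phom g = 𝟙 (FundamentalGroupoid.mk cc) := by
      rw [← phom_trans, phom_eq_of_homotopic hr2H]
      exact smallK cc r2 _ hr2L hsum
    apply hNE
    have e1 : phom γ ≫ phom g = phom g := by
      rw [hsplitγ, hAg, Category.assoc, h2, Category.comp_id]
    calc phom γ = phom γ ≫ 𝟙 _ := (Category.comp_id _).symm
      _ = phom γ ≫ (phom g ≫ phom g.symm) := by rw [phom_comp_symm]
      _ = (phom γ ≫ phom g) ≫ phom g.symm := (Category.assoc _ _ _).symm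
      _ = phom g ≫ phom g.symm := by rw [e1]
      _ = 𝟙 _ := phom_comp_symm g
  -- Claim 2: the diagonal dist b dd is nearly ℓ/2
  have claim2 : (ℓ:ℝ) ≤ (L:ℝ)/2 + dist b dd + dr := by
    by_contra hcon
    push_neg at hcon
    set A1 := subp γ 0 (1/4) γ.extend_zero hb.symm with hA1
    set P := subp γ (1/4) (3/4) hb.symm hdd.symm with hP
    set C1 := subp γ (3/4) 1 hdd.symm γ.extend_one with hC1
    have hA1Lip : LipschitzWith L4 A1 := lipschitzWith_subp hLip (by norm_num) (by norm_num)
      (by norm_num) _ _ (by rw [hL4coe]; apply le_of_eq; ring)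
    have hPLip : LipschitzWith L2 P := lipschitzWith_subp hLip (by norm_num) (by norm_num)
      (by norm_num) _ _ (by rw [hL2coe]; apply le_of_eq; ring)
    have hC1Lip : LipschitzWith L4 C1 := lipschitzWith_subp hLip (by norm_num) (by norm_num)
      (by norm_num) _ _ (by rw [hL4coe]; apply le_of_eq; ring)
    have hsplitγ : phom γ = phom A1 ≫ (phom P ≫ phom C1) := by
      rw [← phom_trans, ← phom_trans]
      exact phom_eq_of_homotopic (subp_split_quarters γ hb.symm hdd.symm)
    obtain ⟨g, hgLip0, _⟩ := exists_gpath hgeo b dd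
    set Kg : ℝ≥0 := nndist b dd + d0 with hKg
    have hKgpos : 0 < Kg := lt_of_lt_of_le hd0 (le_add_self)
    have hgLip : LipschitzWith Kg g := hgLip0.weaken (self_le_add_right _ _)
    have hsum : L2 + Kg < ℓ := by
      rw [← NNReal.coe_lt_coe, NNReal.coe_add, hL2coe, hKg, NNReal.coe_add, coe_nndist, hd0coe]
      linarith
    obtain ⟨r1, hr1L, hr1H⟩ := exists_weighted_trans P g.symm hL2pos hKgpos hPLip
      (lipschitzWith_path_symm hgLip)
    have h1 : phom (P.trans g.symm) = 𝟙 (FundamentalGroupoid.mk b) := by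
      rw [phom_eq_of_homotopic hr1H]
      exact smallK b r1 _ hr1L hsum
    have hPg : phom P = phom g := phom_digon h1
    set Q := C1.trans A1 with hQ
    have hQLip : LipschitzWith (2*L4) Q := lipschitzWith_path_trans hC1Lip hA1Lip
    have h2L4pos : 0 < 2*L4 := by positivity
    have hsum2 : 2*L4 + Kg < ℓ := by
      rw [← NNReal.coe_lt_coe, NNReal.coe_add, NNReal.coe_mul, hL4coe, hKg, NNReal.coe_add,
        coe_nndist, hd0coe]
      push_cast
      linarith
    obtain ⟨r2, hr2L, hr2H⟩ := exists_weighted_trans Q g h2L4pos hKgpos hQLip hgLip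
    have h2 : (phom C1 ≫ phom A1) ≫ phom g = 𝟙 (FundamentalGroupoid.mk dd) := by
      rw [← phom_trans, ← phom_trans, phom_eq_of_homotopic hr2H]
      exact smallK dd r2 _ hr2L hsum2
    apply hNE
    have hγeq : phom γ = phom A1 ≫ (phom g ≫ phom C1) := by rw [hsplitγ, hPg]
    have hid : phom γ ≫ phom γ = phom γ := by
      rw [hγeq]
      have h2' : phom C1 ≫ phom A1 ≫ phom g = 𝟙 (FundamentalGroupoid.mk dd) := by
        rw [← Category.assoc]
        exact h2
      calc (phom A1 ≫ (phom g ≫ phom C1)) ≫ (phom A1 ≫ (phom g ≫ phom C1))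
          = phom A1 ≫ phom g ≫ (phom C1 ≫ phom A1 ≫ phom g) ≫ phom C1 := by
            simp only [Category.assoc]
        _ = phom A1 ≫ (phom g ≫ phom C1) := by rw [h2']; simp only [Category.id_comp]
    calc phom γ = 𝟙 _ ≫ phom γ := (Category.id_comp _).symm
      _ = (phom γ.symm ≫ phom γ) ≫ phom γ := by rw [phom_symm_comp]
      _ = phom γ.symm ≫ (phom γ ≫ phom γ) := Category.assoc _ _ _
      _ = phom γ.symm ≫ phom γ := by rw [hid]
      _ = 𝟙 _ := phom_symm_comp γ
  -- Final numerical contradiction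
  set B0 : ℝ := ((ℓ:ℝ) + dr)/4 with hB0
  have hB0pos : 0 < B0 := by
    rw [hB0]
    positivity
  have hside : ∀ y z : X, dist y z ≤ (L:ℝ)/4 → dist y z ^ q ≤ B0 ^ q := by
    intro y z h
    apply Real.rpow_le_rpow dist_nonneg _ hq0.le
    rw [hB0]
    linarith
  have hdiag : ∀ y z : X, (ℓ:ℝ) ≤ (L:ℝ)/2 + dist y z + dr → 2 * B0 ^ q < dist y z ^ q := by
    intro y z h
    have hkey : th * B0 < dist y z := by
      rw [hB0, hdr] at *
      nlinarith [hℓR, hth1, hth2, sq_nonneg (2 - th), mul_pos hℓR (show (0:ℝ) < 2 - th by linarith)]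
    have h1 : (th * B0) ^ q < dist y z ^ q :=
      Real.rpow_lt_rpow (by positivity) hkey hq0
    have h2 : (th * B0) ^ q = 2 * B0 ^ q := by
      rw [Real.mul_rpow hth0 hB0pos.le, hthq]
    linarith
  have hd1 := hdiag u cc claim1
  have hd2 := hdiag b dd claim2
  have hs1 := hside u b hub
  have hs2 := hside u dd hudd
  have hs3 := hside cc b hccb
  have hs4 := hside cc dd hccdd
  have := hq2 u b dd cc
  linarith

end Master

/-- A good, compact, geodesic metric space with non-trivial fundamental group has
roundness equal to 1. -/
theorem roundness_eq_one_of_good_compact (X : Type*) [MetricSpace X] [CompactSpace X]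
    (hgeo : IsGeodesicSpace X) (hgood : IsGoodSpace X)
    (hpi : ∃ x : X, Nontrivial (FundamentalGroup X x)) :
    roundness (fun x y : X => dist x y) = (1 : EReal) := by
  have h1mem : (1:ℝ) ∈ roundnessSet (fun x y : X => dist x y) := by
    refine ⟨le_rfl, ?_⟩
    intro x00 x01 x10 x11
    simp only [Real.rpow_one]
    have t1 := dist_triangle x00 x01 x11
    have t2 := dist_triangle x00 x10 x11
    have t3 := dist_triangle x01 x00 x10
    have t4 := dist_triangle x01 x11 x10
    have c1 := dist_comm x01 x11
    have c2 := dist_comm x10 x11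
    have c3 := dist_comm x01 x00
    linarith
  have hset : roundnessSet (fun x y : X => dist x y) = {1} := by
    apply Set.eq_singleton_iff_unique_mem.mpr
    refine ⟨h1mem, ?_⟩
    rintro q ⟨hq1, hq2⟩
    by_contra hne
    have hlt : 1 < q := lt_of_le_of_ne hq1 (Ne.symm hne)
    exact no_big_exponent hgeo hgood hpi hlt hq2
  rw [roundness, hset, Set.image_singleton, sSup_singleton]
  rfl
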